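/- Let α₁, α₂ ∈ (0,1] and C > 0. Then there exist 𝒯 > 0 and C' > 0, depending only on C, α₁ and α₂, such that the following holds. Let t < T be real numbers with T - t ≤ 𝒯, and let g₁, g₂ : (t,T] → [0,∞) be functions such that for i = 1, 2 the function s ↦ (s-t)^{(1-α_i)/2} g_i(s) is bounded on (t,T]; set G_i(s) = sup_{r ∈ (t,s]} (r-t)^{(1-α_i)/2} g_i(r). If for all s ∈ (t,T] and each i ∈ {1,2} one has g_i(s) ≤ C ( (s-t)^{(α_i-1)/2} + ∑_{j=1}^{2} (s-t)^{(α_i+α_j-1)/2} G_j(s) ), then G_i(T) ≤ C' for i = 1, 2. -/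

import Mathlib

open MeasureTheory

/-- The circular (Gronwall-type) argument for the weighted suprema
`G_i(s) = sup_{r ∈ (t,s]} (r-t)^{(1-α_i)/2} g_i(r)`: if on a small enough time horizon
`g_i(s) ≤ C((s-t)^{(α_i-1)/2} + ∑_j (s-t)^{(α_i+α_j-1)/2} G_j(s))`, then the weighted
suprema are bounded by a constant depending only on `C, α₁, α₂`. -/
theorem circular_argument_bound (α : Fin 2 → ℝ) (C : ℝ)
    (hα : ∀ i, α i ∈ Set.Ioc (0:ℝ) 1) (hC : 0 < C) :
    ∃ 𝒯 > (0:ℝ), ∃ C' > (0:ℝ), ∀ t T : ℝ, t < T → T - t ≤ 𝒯 →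
      ∀ g : Fin 2 → ℝ → ℝ,
        (∀ i, ∀ s ∈ Set.Ioc t T, 0 ≤ g i s) →
        (∀ i, BddAbove
          ((fun r => (r - t) ^ ((1 - α i) / 2) * g i r) '' Set.Ioc t T)) →
      ∀ G : Fin 2 → ℝ → ℝ,
        (∀ i s, G i s =
          sSup ((fun r => (r - t) ^ ((1 - α i) / 2) * g i r) '' Set.Ioc t s)) →
        (∀ s ∈ Set.Ioc t T, ∀ i,
          g i s ≤ C * ((s - t) ^ ((α i - 1) / 2) +
            ∑ j, (s - t) ^ ((α i + α j - 1) / 2) * G j s)) →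
      ∀ i, G i T ≤ C' := by
  have hα0 := hα 0
  have hα1 := hα 1
  set 𝒯 : ℝ := min ((4*C)⁻¹ ^ (2 / α 0)) ((4*C)⁻¹ ^ (2 / α 1)) with h𝒯def
  have h𝒯pos : 0 < 𝒯 := by
    apply lt_min <;> apply Real.rpow_pos_of_pos <;> positivity
  refine ⟨𝒯, h𝒯pos, 4*C, by positivity, ?_⟩
  intro t T htT h𝒯 g hg hbdd G hG hmain
  have hTle : ∀ j : Fin 2, 𝒯 ≤ (4*C)⁻¹ ^ (2 / α j) := by
    intro j; fin_cases j
    · exact min_le_left _ _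
    · exact min_le_right _ _
  have hkey : ∀ j : Fin 2, C * 𝒯 ^ (α j / 2) ≤ 4⁻¹ := by
    intro j
    have hαj := (hα j).1
    have h1 : 𝒯 ^ (α j / 2) ≤ ((4*C)⁻¹ ^ (2 / α j)) ^ (α j / 2) :=
      Real.rpow_le_rpow h𝒯pos.le (hTle j) (by linarith)
    have h2 : ((4*C)⁻¹ ^ (2 / α j)) ^ (α j / 2) = (4*C)⁻¹ := by
      rw [← Real.rpow_mul (by positivity)]
      rw [show 2 / α j * (α j / 2) = 1 by field_simp [hαj.ne'], Real.rpow_one]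
    calc C * 𝒯 ^ (α j / 2) ≤ C * (4*C)⁻¹ :=
          mul_le_mul_of_nonneg_left (h1.trans_eq h2) hC.le
      _ = 4⁻¹ := by
          rw [mul_comm 4 C, mul_inv, ← mul_assoc, mul_inv_cancel₀ hC.ne', one_mul]
  -- nonnegativity of G
  have hGnn : ∀ (j : Fin 2) (s : ℝ), s ∈ Set.Ioc t T → 0 ≤ G j s := by
    intro j s hs
    rw [hG j s]
    apply Real.sSup_nonneg
    rintro x ⟨r, hr, rfl⟩
    have hrt : 0 < r - t := sub_pos.2 hr.1
    have : r ∈ Set.Ioc t T := ⟨hr.1, hr.2.trans hs.2⟩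
    exact mul_nonneg (Real.rpow_nonneg hrt.le _) (hg j r this)
  -- monotonicity of G
  have hGmono : ∀ (j : Fin 2) (r s : ℝ), t < r → r ≤ s → s ≤ T → G j r ≤ G j s := by
    intro j r s hr hrs hsT
    rw [hG j r, hG j s]
    apply csSup_le_csSup
    · exact (hbdd j).mono (Set.image_mono (Set.Ioc_subset_Ioc le_rfl hsT))
    · exact (Set.nonempty_Ioc.2 hr).image _
    · exact Set.image_mono (Set.Ioc_subset_Ioc le_rfl hrs)
  -- key bound
  have hGbound : ∀ s ∈ Set.Ioc t T, ∀ i : Fin 2, G i s ≤ C + 4⁻¹ * ∑ j, G j s := by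
    intro s hs i
    have hsum_nn : 0 ≤ ∑ j, G j s := Finset.sum_nonneg fun j _ => hGnn j s hs
    rw [hG i s]
    apply Real.sSup_le
    · rintro x ⟨r, hr, rfl⟩
      have hrt : 0 < r - t := sub_pos.2 hr.1
      have hrT : r ∈ Set.Ioc t T := ⟨hr.1, hr.2.trans hs.2⟩
      have hstep := hmain r hrT i
      have h0 : (0:ℝ) ≤ (r - t) ^ ((1 - α i) / 2) := Real.rpow_nonneg hrt.le _
      have hmul : (r - t) ^ ((1 - α i) / 2) * g i r ≤
          (r - t) ^ ((1 - α i) / 2) * (C * ((r - t) ^ ((α i - 1) / 2) +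
            ∑ j, (r - t) ^ ((α i + α j - 1) / 2) * G j r)) :=
        mul_le_mul_of_nonneg_left hstep h0
      have e1 : (r - t) ^ ((1 - α i) / 2) * (r - t) ^ ((α i - 1) / 2) = 1 := by
        rw [← Real.rpow_add hrt]
        rw [show (1 - α i) / 2 + (α i - 1) / 2 = 0 by ring, Real.rpow_zero]
      have e2 : ∀ j : Fin 2, (r - t) ^ ((1 - α i) / 2) *
          (r - t) ^ ((α i + α j - 1) / 2) = (r - t) ^ (α j / 2) := by
        intro j
        rw [← Real.rpow_add hrt]
        congr 1; ring
      have hexpand : (r - t) ^ ((1 - α i) / 2) * (C * ((r - t) ^ ((α i - 1) / 2) +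
            ∑ j, (r - t) ^ ((α i + α j - 1) / 2) * G j r)) =
          C + ∑ j, C * ((r - t) ^ (α j / 2) * G j r) := by
        rw [Fin.sum_univ_two, Fin.sum_univ_two]
        linear_combination C * e1 + C * G 0 r * e2 0 + C * G 1 r * e2 1
      have hterm : ∀ j : Fin 2, C * ((r - t) ^ (α j / 2) * G j r) ≤ 4⁻¹ * G j s := by
        intro j
        have hαj := (hα j).1
        have hGr : 0 ≤ G j r := hGnn j r hrT
        have hrle : r - t ≤ 𝒯 := by
          have : r - t ≤ T - t := by linarith [hr.2, hs.2]
          linarith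
        have h3 : (r - t) ^ (α j / 2) ≤ 𝒯 ^ (α j / 2) :=
          Real.rpow_le_rpow hrt.le hrle (by linarith)
        have h4 : G j r ≤ G j s := hGmono j r s hr.1 hr.2 hs.2
        have h5 : (r - t) ^ (α j / 2) * G j r ≤ 𝒯 ^ (α j / 2) * G j s :=
          mul_le_mul h3 h4 hGr (Real.rpow_nonneg h𝒯pos.le _)
        calc C * ((r - t) ^ (α j / 2) * G j r) ≤ C * (𝒯 ^ (α j / 2) * G j s) :=
              mul_le_mul_of_nonneg_left h5 hC.le
          _ = (C * 𝒯 ^ (α j / 2)) * G j s := by ring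
          _ ≤ 4⁻¹ * G j s := mul_le_mul_of_nonneg_right (hkey j) (hGnn j s hs)
      calc (r - t) ^ ((1 - α i) / 2) * g i r ≤
            C + ∑ j, C * ((r - t) ^ (α j / 2) * G j r) := hmul.trans_eq hexpand
        _ ≤ C + ∑ j, 4⁻¹ * G j s :=
            add_le_add_right (Finset.sum_le_sum fun j _ => hterm j) C
        _ = C + 4⁻¹ * ∑ j, G j s := by rw [← Finset.mul_sum]
    · positivity
  -- conclude
  have hT : T ∈ Set.Ioc t T := ⟨htT, le_rfl⟩
  have h0 := hGbound T hT 0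
  have h1 := hGbound T hT 1
  have hn0 := hGnn 0 T hT
  have hn1 := hGnn 1 T hT
  rw [Fin.sum_univ_two] at h0 h1
  intro i
  have hi := hGbound T hT i
  rw [Fin.sum_univ_two] at hi
  linarith
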